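/- Let G and H be finite simple graphs, each with more than one vertex. (i) If for some n₁, n₂ there are a unit-distance embedding of G in ℝ^{n₁} whose image lies on a sphere of radius r₁ with 0 < r₁ < 1 and a unit-distance embedding of H in ℝ^{n₂} whose image lies on a sphere of radius r₂ with 0 < r₂ < 1 such that r₁² + r₂² = 1, then G + H has a unit-distance embedding in ℝ^{n₁ + n₂}. (ii) Conversely, if G + H has a unit-distance embedding in ℝⁿ, then there exist n₁ and n₂ with n₁ + n₂ = n and unit-distance embeddings of G in ℝ^{n₁} and of H in ℝ^{n₂} on spheres of radii r₁, r₂ ∈ (0,1) with r₁² + r₂² = 1. -/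

import Mathlib

/-- A unit-distance embedding of a simple graph `G` in `ℝⁿ`: an injective map sending
adjacent vertices to points at distance 1, such that no other vertex lies on the
closed segment between the endpoints of an edge. -/
def IsUDEmbedding {V : Type*} (G : SimpleGraph V) {n : ℕ}
    (f : V → EuclideanSpace ℝ (Fin n)) : Prop :=
  Function.Injective f ∧
  (∀ ⦃u v⦄, G.Adj u v → dist (f u) (f v) = 1) ∧
  (∀ ⦃u v⦄, G.Adj u v → ∀ w, w ≠ u → w ≠ v → f w ∉ segment ℝ (f u) (f v))

/-- `G` has a unit-distance embedding in `ℝⁿ`. -/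
def HasUDEmbedding {V : Type*} (G : SimpleGraph V) (n : ℕ) : Prop :=
  ∃ f : V → EuclideanSpace ℝ (Fin n), IsUDEmbedding G f

/-- `G` has a unit-distance embedding in `ℝⁿ` whose image lies on a sphere of radius `r`. -/
def HasSphericalEmbeddingRadius {V : Type*} (G : SimpleGraph V) (n : ℕ) (r : ℝ) : Prop :=
  ∃ f : V → EuclideanSpace ℝ (Fin n), IsUDEmbedding G f ∧
    ∃ c : EuclideanSpace ℝ (Fin n), ∀ v, dist (f v) c = r

/-- `G` has a unit-distance embedding in `ℝⁿ` whose image lies on a sphere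
of radius `0 < r < 1`. -/
def HasSphericalEmbedding {V : Type*} (G : SimpleGraph V) (n : ℕ) : Prop :=
  ∃ r : ℝ, 0 < r ∧ r < 1 ∧ HasSphericalEmbeddingRadius G n r

/-- The dimension of a graph: the least `n` such that `G` has a unit-distance
embedding in `ℝⁿ`. -/
noncomputable def graphDim {V : Type*} (G : SimpleGraph V) : ℕ :=
  sInf {n | HasUDEmbedding G n}

/-- The spherical dimension of a graph: the least `n` such that `G` has a unit-distance
embedding in `ℝⁿ` on a sphere of radius strictly between 0 and 1.  By convention the
spherical dimension of a graph with at most one vertex is `0`. -/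
noncomputable def sphericalDim {V : Type*} [Fintype V] (G : SimpleGraph V) : ℕ :=
  if Fintype.card V ≤ 1 then 0 else sInf {n | HasSphericalEmbedding G n}

/-- The join `G + H` of two graphs: disjoint union together with all edges between them. -/
def graphJoin {V W : Type*} (G : SimpleGraph V) (H : SimpleGraph W) :
    SimpleGraph (V ⊕ W) :=
  SimpleGraph.fromRel (fun x y =>
    match x, y with
    | Sum.inl a, Sum.inl b => G.Adj a b
    | Sum.inr a, Sum.inr b => H.Adj a b
    | Sum.inl _, Sum.inr _ => True
    | Sum.inr _, Sum.inl _ => False)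

/-- `H` is a minor of `G` (branch-set formulation, equivalent to being obtainable from `G`
by vertex deletions, edge deletions and edge contractions). -/
def IsMinorOf {W V : Type*} (H : SimpleGraph W) (G : SimpleGraph V) : Prop :=
  ∃ φ : W → Set V,
    (∀ w, (SimpleGraph.induce (φ w) G).Connected) ∧
    (Pairwise fun w w' => Disjoint (φ w) (φ w')) ∧
    (∀ ⦃w w'⦄, H.Adj w w' → ∃ x ∈ φ w, ∃ y ∈ φ w', G.Adj x y)

/-- `H` is a proper minor of `G`: a minor that is not isomorphic to `G`. -/
def IsProperMinorOf {W V : Type*} (H : SimpleGraph W) (G : SimpleGraph V) : Prop :=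
  IsMinorOf H G ∧ ¬ Nonempty (H ≃g G)

/-- `G` is minor minimal with respect to dimension `n`. -/
def MinorMinimalDim {V : Type*} (G : SimpleGraph V) (n : ℕ) : Prop :=
  graphDim G = n ∧
  ∀ (W : Type) [Fintype W] (H : SimpleGraph W), Nonempty W →
    IsProperMinorOf H G → graphDim H < n

/-- `G` is minor minimal with respect to spherical dimension `n`. -/
def MinorMinimalSDim {V : Type*} [Fintype V] (G : SimpleGraph V) (n : ℕ) : Prop :=
  sphericalDim G = n ∧
  ∀ (W : Type) [Fintype W] (H : SimpleGraph W), Nonempty W →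
    IsProperMinorOf H G → sphericalDim H < n

/-- The vertex type of the graph `Sₙ`. -/
def SType : ℕ → Type
  | 0 => Fin 0
  | 1 => Fin 1
  | 2 => Fin 2
  | 3 => Fin 3
  | (n + 4) => Fin (n + 1) ⊕ Fin 3

instance : (n : ℕ) → Fintype (SType n)
  | 0 => inferInstanceAs (Fintype (Fin 0))
  | 1 => inferInstanceAs (Fintype (Fin 1))
  | 2 => inferInstanceAs (Fintype (Fin 2))
  | 3 => inferInstanceAs (Fintype (Fin 3))
  | (n + 4) => inferInstanceAs (Fintype (Fin (n + 1) ⊕ Fin 3))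

/-- The graph `Sₙ`:  `S₁ = ε₁`, `S₂ = ε₂`, `S₃ = ε₃`, and `Sₙ = K_{n-3} + ε₃` for `n ≥ 4`. -/
def SGraph : (n : ℕ) → SimpleGraph (SType n)
  | 0 => ⊥
  | 1 => ⊥
  | 2 => ⊥
  | 3 => ⊥
  | (n + 4) => graphJoin (⊤ : SimpleGraph (Fin (n + 1))) (⊥ : SimpleGraph (Fin 3))


lemma segment_sub_iff {E : Type*} [AddCommGroup E] [Module ℝ E] {x y z c : E} :
    z - c ∈ segment ℝ (x - c) (y - c) ↔ z ∈ segment ℝ x y := by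
  have := mem_segment_translate (𝕜 := ℝ) (-c) (x := z) (b := x) (c := y)
  rw [neg_add_eq_sub, neg_add_eq_sub, neg_add_eq_sub] at this
  exact this


lemma graphJoin_adj_ll {V W : Type*} {G : SimpleGraph V} {H : SimpleGraph W} {u v : V} :
    (graphJoin G H).Adj (Sum.inl u) (Sum.inl v) ↔ G.Adj u v := by
  simp only [graphJoin, SimpleGraph.fromRel_adj, ne_eq, Sum.inl.injEq]
  constructor
  · rintro ⟨h, h2 | h2⟩ <;> [exact h2; exact h2.symm]
  · intro h; exact ⟨h.ne, Or.inl h⟩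


lemma graphJoin_adj_rr {V W : Type*} {G : SimpleGraph V} {H : SimpleGraph W} {u v : W} :
    (graphJoin G H).Adj (Sum.inr u) (Sum.inr v) ↔ H.Adj u v := by
  simp only [graphJoin, SimpleGraph.fromRel_adj, ne_eq, Sum.inr.injEq]
  constructor
  · rintro ⟨h, h2 | h2⟩ <;> [exact h2; exact h2.symm]
  · intro h; exact ⟨h.ne, Or.inl h⟩


lemma graphJoin_adj_lr {V W : Type*} {G : SimpleGraph V} {H : SimpleGraph W} {u : V} {w : W} :
    (graphJoin G H).Adj (Sum.inl u) (Sum.inr w) := by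
  simp [graphJoin, SimpleGraph.fromRel_adj]


noncomputable def JL (m k : ℕ) : EuclideanSpace ℝ (Fin m) →ₗᵢ[ℝ] EuclideanSpace ℝ (Fin (m + k)) where
  toFun x := WithLp.toLp 2 (fun i => Fin.addCases (fun i₁ => x i₁) (fun _ => (0:ℝ)) i)
  map_add' x y := by
    ext i
    refine Fin.addCases (fun i₁ => ?_) (fun i₂ => ?_) i <;> simp [PiLp.add_apply]
  map_smul' c x := by
    ext i
    refine Fin.addCases (fun i₁ => ?_) (fun i₂ => ?_) i <;> simp [PiLp.smul_apply]
  norm_map' x := by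
    rw [EuclideanSpace.norm_eq, EuclideanSpace.norm_eq]
    congr 1
    rw [Fin.sum_univ_add]
    simp


noncomputable def JR (m k : ℕ) : EuclideanSpace ℝ (Fin k) →ₗᵢ[ℝ] EuclideanSpace ℝ (Fin (m + k)) where
  toFun y := WithLp.toLp 2 (fun i => Fin.addCases (fun _ => (0:ℝ)) (fun i₂ => y i₂) i)
  map_add' x y := by
    ext i
    refine Fin.addCases (fun i₁ => ?_) (fun i₂ => ?_) i <;> simp [PiLp.add_apply]
  map_smul' c x := by
    ext i
    refine Fin.addCases (fun i₁ => ?_) (fun i₂ => ?_) i <;> simp [PiLp.smul_apply]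
  norm_map' y := by
    rw [EuclideanSpace.norm_eq, EuclideanSpace.norm_eq]
    congr 1
    rw [Fin.sum_univ_add]
    simp


lemma inner_JL_JR {m k : ℕ} (x : EuclideanSpace ℝ (Fin m)) (y : EuclideanSpace ℝ (Fin k)) :
    inner ℝ (JL m k x) (JR m k y) = (0 : ℝ) := by
  rw [PiLp.inner_apply, Fin.sum_univ_add]
  simp [JL, JR]


lemma eq_of_sq_eq_sq' {a b : ℝ} (ha : 0 ≤ a) (hb : 0 ≤ b) (h : a ^ 2 = b ^ 2) : a = b := by
  rw [← Real.sqrt_sq ha, ← Real.sqrt_sq hb, h]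


lemma segment_comap' {E F : Type*} [AddCommGroup E] [Module ℝ E] [AddCommGroup F] [Module ℝ F]
    (L : E → F) (hadd : ∀ x y, L (x + y) = L x + L y)
    (hsmul : ∀ (c : ℝ) x, L (c • x) = c • L x) (hinj : Function.Injective L) {x y z : E} :
    L z ∈ segment ℝ (L x) (L y) ↔ z ∈ segment ℝ x y := by
  constructor
  · rintro ⟨a, b, ha, hb, hab, h⟩
    exact ⟨a, b, ha, hb, hab, hinj (by rw [hadd, hsmul, hsmul, h])⟩
  · rintro ⟨a, b, ha, hb, hab, h⟩
    exact ⟨a, b, ha, hb, hab, by rw [← hsmul, ← hsmul, ← hadd, h]⟩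


lemma join_embed {V W : Type*} (G : SimpleGraph V) (H : SimpleGraph W)
    {n₁ n₂ : ℕ} {r₁ r₂ : ℝ} (hr₁ : 0 < r₁) (hr₂ : 0 < r₂) (hsum : r₁ ^ 2 + r₂ ^ 2 = 1)
    (hG : HasSphericalEmbeddingRadius G n₁ r₁) (hH : HasSphericalEmbeddingRadius H n₂ r₂) :
    HasUDEmbedding (graphJoin G H) (n₁ + n₂) := by
  obtain ⟨f, ⟨finj, fdist, fseg⟩, c₁, hc₁⟩ := hG
  obtain ⟨g, ⟨ginj, gdist, gseg⟩, c₂, hc₂⟩ := hH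
  set A : V → EuclideanSpace ℝ (Fin n₁) := fun v => f v - c₁ with hA
  set B : W → EuclideanSpace ℝ (Fin n₂) := fun w => g w - c₂ with hB
  have hAnorm : ∀ v, ‖A v‖ = r₁ := fun v => by
    rw [hA]; rw [← dist_eq_norm]; exact hc₁ v
  have hBnorm : ∀ w, ‖B w‖ = r₂ := fun w => by
    rw [hB]; rw [← dist_eq_norm]; exact hc₂ w
  have hAinj : Function.Injective A := fun v v' h => finj (by
    have : f v - c₁ = f v' - c₁ := h
    linear_combination (norm := module) this)
  have hBinj : Function.Injective B := fun w w' h => ginj (by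
    have : g w - c₂ = g w' - c₂ := h
    linear_combination (norm := module) this)
  set F : V ⊕ W → EuclideanSpace ℝ (Fin (n₁ + n₂)) :=
    Sum.elim (fun v => JL n₁ n₂ (A v)) (fun w => JR n₁ n₂ (B w)) with hF
  have orth : ∀ v w, inner ℝ (JL n₁ n₂ (A v)) (JR n₁ n₂ (B w)) = (0 : ℝ) :=
    fun v w => inner_JL_JR _ _
  -- distance across
  have cross : ∀ v w, dist (JL n₁ n₂ (A v)) (JR n₁ n₂ (B w)) = 1 := by
    intro v w
    refine eq_of_sq_eq_sq' dist_nonneg zero_le_one ?_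
    rw [dist_eq_norm, one_pow]
    rw [← real_inner_self_eq_norm_sq]
    rw [inner_sub_sub_self]
    rw [orth v w, real_inner_comm ((JL n₁ n₂) (A v)) ((JR n₁ n₂) (B w)), orth v w,
      real_inner_self_eq_norm_sq, real_inner_self_eq_norm_sq,
      (JL n₁ n₂).norm_map, (JR n₁ n₂).norm_map, hAnorm, hBnorm]
    linarith
  refine ⟨F, ?_, ?_, ?_⟩
  · -- injectivity
    rintro (v | w) (v' | w') h
    · simp only [hF, Sum.elim_inl] at h
      exact congrArg Sum.inl (hAinj ((JL n₁ n₂).injective h))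
    · exfalso
      simp only [hF, Sum.elim_inl, Sum.elim_inr] at h
      have h0 : (r₁ : ℝ) ^ 2 = 0 := by
        have := orth v w'
        rw [← h, real_inner_self_eq_norm_sq, (JL n₁ n₂).norm_map, hAnorm] at this
        exact this
      nlinarith
    · exfalso
      simp only [hF, Sum.elim_inl, Sum.elim_inr] at h
      have h0 : (r₁ : ℝ) ^ 2 = 0 := by
        have := orth v' w
        rw [h, real_inner_self_eq_norm_sq, (JL n₁ n₂).norm_map, hAnorm] at this
        exact this
      nlinarith
    · simp only [hF, Sum.elim_inr] at h
      exact congrArg Sum.inr (hBinj ((JR n₁ n₂).injective h))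
  · -- edge distances
    rintro (v | w) (v' | w') hadj
    · rw [graphJoin_adj_ll] at hadj
      simp only [hF, Sum.elim_inl]
      rw [(JL n₁ n₂).dist_map, hA]
      simpa [dist_sub_right] using fdist hadj
    · simpa only [hF, Sum.elim_inl, Sum.elim_inr] using cross v w'
    · simp only [hF, Sum.elim_inl, Sum.elim_inr]
      rw [dist_comm]; exact cross v' w
    · rw [graphJoin_adj_rr] at hadj
      simp only [hF, Sum.elim_inr]
      rw [(JR n₁ n₂).dist_map, hB]
      simpa [dist_sub_right] using gdist hadj
  · -- segment condition
    have JLseg : ∀ {x y z : EuclideanSpace ℝ (Fin n₁)},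
        JL n₁ n₂ z ∈ segment ℝ (JL n₁ n₂ x) (JL n₁ n₂ y) ↔ z ∈ segment ℝ x y :=
      fun {x y z} => segment_comap' (JL n₁ n₂) (map_add _) (map_smul _) (JL n₁ n₂).injective
    have JRseg : ∀ {x y z : EuclideanSpace ℝ (Fin n₂)},
        JR n₁ n₂ z ∈ segment ℝ (JR n₁ n₂ x) (JR n₁ n₂ y) ↔ z ∈ segment ℝ x y :=
      fun {x y z} => segment_comap' (JR n₁ n₂) (map_add _) (map_smul _) (JR n₁ n₂).injective
    -- cross-edge elimination
    have crossseg : ∀ (u : V) (x : W) (w : V ⊕ W), w ≠ Sum.inl u → w ≠ Sum.inr x →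
        F w ∉ segment ℝ (F (Sum.inl u)) (F (Sum.inr x)) := by
      rintro u x (v | y) hw1 hw2 hseg
      · simp only [hF, Sum.elim_inl, Sum.elim_inr] at hseg
        obtain ⟨a, b, ha, hb, hab, h⟩ := hseg
        have h2 := congrArg (fun z : EuclideanSpace ℝ (Fin (n₁ + n₂)) =>
          (inner ℝ z (JR n₁ n₂ (B x)) : ℝ)) h
        simp only [inner_add_left, real_inner_smul_left, inner_JL_JR,
          real_inner_self_eq_norm_sq, LinearIsometry.norm_map, hBnorm, mul_zero, zero_add] at h2
        have hb0 : b = 0 := by nlinarith [pow_pos hr₂ 2]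
        have ha1 : a = 1 := by linarith
        rw [ha1, hb0, zero_smul, add_zero, one_smul] at h
        exact hw1 (congrArg Sum.inl (hAinj ((JL n₁ n₂).injective h.symm)))
      · simp only [hF, Sum.elim_inl, Sum.elim_inr] at hseg
        obtain ⟨a, b, ha, hb, hab, h⟩ := hseg
        have h2 := congrArg (fun z : EuclideanSpace ℝ (Fin (n₁ + n₂)) =>
          (inner ℝ (JL n₁ n₂ (A u)) z : ℝ)) h
        simp only [inner_add_right, real_inner_smul_right, inner_JL_JR,
          real_inner_self_eq_norm_sq, LinearIsometry.norm_map, hAnorm, mul_zero, add_zero] at h2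
        have ha0 : a = 0 := by nlinarith [pow_pos hr₁ 2]
        have hb1 : b = 1 := by linarith
        rw [ha0, hb1, zero_smul, zero_add, one_smul] at h
        exact hw2 (congrArg Sum.inr (hBinj ((JR n₁ n₂).injective h.symm)))
    rintro (u | x) (u' | x') hadj w hw1 hw2 hseg
    · -- edge inside G
      rw [graphJoin_adj_ll] at hadj
      obtain (v | y) := w
      · simp only [hF, Sum.elim_inl] at hseg
        rw [JLseg, hA, segment_sub_iff] at hseg
        exact fseg hadj v (fun h => hw1 (congrArg Sum.inl h))
          (fun h => hw2 (congrArg Sum.inl h)) hseg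
      · simp only [hF, Sum.elim_inl, Sum.elim_inr] at hseg
        obtain ⟨a, b, ha, hb, hab, h⟩ := hseg
        have h2 := congrArg (fun z : EuclideanSpace ℝ (Fin (n₁ + n₂)) =>
          (inner ℝ z (JR n₁ n₂ (B y)) : ℝ)) h
        simp only [inner_add_left, real_inner_smul_left, inner_JL_JR,
          real_inner_self_eq_norm_sq, LinearIsometry.norm_map, hBnorm, mul_zero, add_zero] at h2
        nlinarith
    · exact crossseg u x' w hw1 hw2 hseg
    · rw [segment_symm] at hseg
      exact crossseg u' x w hw2 hw1 hseg
    · -- edge inside H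
      rw [graphJoin_adj_rr] at hadj
      obtain (v | y) := w
      · simp only [hF, Sum.elim_inl, Sum.elim_inr] at hseg
        obtain ⟨a, b, ha, hb, hab, h⟩ := hseg
        have h2 := congrArg (fun z : EuclideanSpace ℝ (Fin (n₁ + n₂)) =>
          (inner ℝ (JL n₁ n₂ (A v)) z : ℝ)) h
        simp only [inner_add_right, real_inner_smul_right, inner_JL_JR,
          real_inner_self_eq_norm_sq, LinearIsometry.norm_map, hAnorm, mul_zero, add_zero] at h2
        nlinarith [hAnorm v, real_inner_self_eq_norm_sq (JL n₁ n₂ (A v))]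
      · simp only [hF, Sum.elim_inr] at hseg
        rw [JRseg, hB, segment_sub_iff] at hseg
        exact gseg hadj y (fun h => hw1 (congrArg Sum.inr h))
          (fun h => hw2 (congrArg Sum.inr h)) hseg



lemma sph_comp {V : Type*} (G : SimpleGraph V) {m m' : ℕ} {r : ℝ}
    (L : EuclideanSpace ℝ (Fin m) →ₗᵢ[ℝ] EuclideanSpace ℝ (Fin m')) :
    HasSphericalEmbeddingRadius G m r → HasSphericalEmbeddingRadius G m' r := by
  rintro ⟨f, ⟨finj, fdist, fseg⟩, c, hc⟩
  refine ⟨fun v => L (f v), ⟨L.injective.comp finj, ?_, ?_⟩, L c, fun v => by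
    rw [L.dist_map]; exact hc v⟩
  · intro u v h; rw [L.dist_map]; exact fdist h
  · intro u v h w hw1 hw2 hseg
    rw [segment_comap' L (map_add _) (map_smul _) L.injective] at hseg
    exact fseg h w hw1 hw2 hseg


lemma sph_pad {V : Type*} (G : SimpleGraph V) {m m' : ℕ} {r : ℝ} (h : m ≤ m') :
    HasSphericalEmbeddingRadius G m r → HasSphericalEmbeddingRadius G m' r := by
  have e : m + (m' - m) = m' := Nat.add_sub_cancel' h
  exact sph_comp G (((LinearIsometryEquiv.piLpCongrLeft 2 ℝ ℝ
    (finCongr e)).toLinearIsometry).comp (JL m (m' - m)))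


lemma sph_lift {V : Type*} (G : SimpleGraph V) {m : ℕ} {r r' : ℝ} (hr : 0 ≤ r) (hrr : r ≤ r') :
    HasSphericalEmbeddingRadius G m r → HasSphericalEmbeddingRadius G (m + 1) r' := by
  rintro ⟨f, ⟨finj, fdist, fseg⟩, c, hc⟩
  set hh : ℝ := Real.sqrt (r' ^ 2 - r ^ 2) with hhh
  have hh2 : hh ^ 2 = r' ^ 2 - r ^ 2 := Real.sq_sqrt (by nlinarith)
  set y₀ : EuclideanSpace ℝ (Fin 1) := EuclideanSpace.single (0 : Fin 1) hh with hy₀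
  set g : V → EuclideanSpace ℝ (Fin (m + 1)) :=
    fun v => JR m 1 y₀ + JL m 1 (f v) with hg
  have gdiff : ∀ v v', g v - g v' = JL m 1 (f v - f v') := by
    intro v v'; show JR m 1 y₀ + JL m 1 (f v) - (JR m 1 y₀ + JL m 1 (f v')) = _; rw [map_sub]; abel
  refine ⟨g, ⟨?_, ?_, ?_⟩, JL m 1 c, fun v => ?_⟩
  · intro v v' h
    have h2 : JL m 1 (f v - f v') = 0 := by rw [← gdiff, h, sub_self]
    have h3 : JL m 1 (f v - f v') = JL m 1 0 := by rw [h2, map_zero]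
    exact finj (sub_eq_zero.mp ((JL m 1).injective h3))
  · intro u v h
    rw [dist_eq_norm, gdiff, (JL m 1).norm_map, ← dist_eq_norm]
    exact fdist h
  · intro u v h w hw1 hw2 hseg
    rw [hg] at hseg
    rw [mem_segment_translate ℝ (JR m 1 y₀)] at hseg
    rw [segment_comap' (JL m 1) (map_add _) (map_smul _) (JL m 1).injective] at hseg
    exact fseg h w hw1 hw2 hseg
  · have hr' : 0 ≤ r' := le_trans hr hrr
    refine eq_of_sq_eq_sq' dist_nonneg hr' ?_
    rw [dist_eq_norm, hg]
    have : JR m 1 y₀ + JL m 1 (f v) - JL m 1 c = JL m 1 (f v - c) + JR m 1 y₀ := by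
      rw [map_sub]; abel
    rw [this, norm_add_sq_real, inner_JL_JR, (JL m 1).norm_map, (JR m 1).norm_map]
    rw [hy₀, EuclideanSpace.norm_single]
    have : ‖f v - c‖ = r := by rw [← dist_eq_norm]; exact hc v
    rw [this]
    rw [Real.norm_eq_abs, abs_of_nonneg (show (0:ℝ) ≤ hh from hhh ▸ Real.sqrt_nonneg _)]
    rw [hh2]; ring


lemma restrict_to_subspace {X : Type*} (K : SimpleGraph X) {n : ℕ}
    (p : X → EuclideanSpace ℝ (Fin n)) (hinj : Function.Injective p)
    (hdist : ∀ ⦃x y⦄, K.Adj x y → dist (p x) (p y) = 1)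
    (hseg : ∀ ⦃x y⦄, K.Adj x y → ∀ z, z ≠ x → z ≠ y → p z ∉ segment ℝ (p x) (p y))
    (U : Submodule ℝ (EuclideanSpace ℝ (Fin n))) (c : EuclideanSpace ℝ (Fin n)) {r : ℝ}
    (hmem : ∀ x, p x - c ∈ U) (hrad : ∀ x, ‖p x - c‖ = r) :
    HasSphericalEmbeddingRadius K (Module.finrank ℝ U) r := by
  have bas := stdOrthonormalBasis ℝ U
  set ι : X → U := fun x => ⟨p x - c, hmem x⟩ with hι
  set g : X → EuclideanSpace ℝ (Fin (Module.finrank ℝ U)) := fun x => bas.repr (ι x) with hg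
  have hιdist : ∀ x y, dist (ι x) (ι y) = dist (p x) (p y) := by
    intro x y
    rw [Subtype.dist_eq, hι]
    show dist (p x - c) (p y - c) = _
    rw [dist_eq_norm, sub_sub_sub_cancel_right, ← dist_eq_norm]
  refine ⟨g, ⟨?_, ?_, ?_⟩, 0, fun x => ?_⟩
  · intro x y h
    rw [hg] at h
    have h2 : ι x = ι y := bas.repr.injective h
    have h3 : p x - c = p y - c := congrArg Subtype.val h2
    exact hinj (by rw [← sub_left_injective.eq_iff]; exact h3)
  · intro x y h
    rw [hg]
    show dist (bas.repr (ι x)) (bas.repr (ι y)) = 1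
    rw [bas.repr.dist_map, hιdist]
    exact hdist h
  · intro x y h z hz1 hz2 hs
    rw [hg] at hs
    rw [segment_comap' (⇑bas.repr) (map_add _) (map_smul _) bas.repr.injective] at hs
    have hs2 := (segment_comap' (⇑(U.subtype)) (map_add _) (map_smul _)
      (U.injective_subtype)).mpr hs
    simp only [Submodule.coe_subtype, hι] at hs2
    rw [segment_sub_iff] at hs2
    exact hseg h z hz1 hz2 hs2
  · rw [hg]
    show dist (bas.repr (ι x)) 0 = r
    rw [dist_zero_right, bas.repr.norm_map]
    show ‖p x - c‖ = r
    exact hrad x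


set_option maxHeartbeats 1000000 in

lemma join_unembed {V W : Type*} (G : SimpleGraph V) (H : SimpleGraph W)
    [Fintype V] [Fintype W]
    (hV : 1 < Fintype.card V) (hW : 1 < Fintype.card W) (n : ℕ)
    (hJ : HasUDEmbedding (graphJoin G H) n) :
    ∃ (n₁ n₂ : ℕ) (r₁ r₂ : ℝ), n₁ + n₂ = n ∧ 0 < r₁ ∧ r₁ < 1 ∧ 0 < r₂ ∧ r₂ < 1 ∧
      r₁ ^ 2 + r₂ ^ 2 = 1 ∧ HasSphericalEmbeddingRadius G n₁ r₁ ∧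
      HasSphericalEmbeddingRadius H n₂ r₂ := by
  classical
  obtain ⟨F, Finj, Fdist, Fseg⟩ := hJ
  obtain ⟨v₀, v₁, hv01⟩ := Fintype.exists_pair_of_one_lt_card hV
  obtain ⟨w₀, w₁, hw01⟩ := Fintype.exists_pair_of_one_lt_card hW
  set a : V → EuclideanSpace ℝ (Fin n) := fun v => F (Sum.inl v) with ha
  set b : W → EuclideanSpace ℝ (Fin n) := fun w => F (Sum.inr w) with hb
  have hcross : ∀ v w, dist (a v) (b w) = 1 := fun v w => Fdist graphJoin_adj_lr
  set d : EuclideanSpace ℝ (Fin n) := b w₀ - a v₀ with hd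
  have hd1 : ‖d‖ = 1 := by rw [hd, ← dist_eq_norm, dist_comm]; exact hcross v₀ w₀
  have hd2 : ‖d‖ ^ 2 = 1 := by rw [hd1]; norm_num
  set u : V → EuclideanSpace ℝ (Fin n) := fun v => a v - a v₀ with hu
  set ee : W → EuclideanSpace ℝ (Fin n) := fun w => b w - b w₀ with hee
  have sqid : ∀ (x y : EuclideanSpace ℝ (Fin n)), dist x y = 1 →
      ‖x‖ ^ 2 - 2 * (inner ℝ x y : ℝ) + ‖y‖ ^ 2 = 1 := by
    intro x y hxy
    have h2 := norm_sub_sq_real x y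
    rw [← dist_eq_norm, hxy] at h2
    nlinarith
  have key1 : ∀ v, ‖u v‖ ^ 2 = 2 * (inner ℝ (u v) d : ℝ) := by
    intro v
    have h1 : dist (u v) d = 1 := by
      rw [dist_eq_norm, hu, hd]
      show ‖a v - a v₀ - (b w₀ - a v₀)‖ = 1
      have h3 : a v - a v₀ - (b w₀ - a v₀) = a v - b w₀ := by abel
      rw [h3, ← dist_eq_norm]; exact hcross v w₀
    have h4 := sqid _ _ h1
    linarith
  have key2 : ∀ w, ‖ee w‖ ^ 2 = -(2 * (inner ℝ (ee w) d : ℝ)) := by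
    intro w
    have h1 : ‖ee w + d‖ = 1 := by
      rw [hee, hd]
      show ‖b w - b w₀ + (b w₀ - a v₀)‖ = 1
      have h3 : b w - b w₀ + (b w₀ - a v₀) = b w - a v₀ := by abel
      rw [h3, ← dist_eq_norm, dist_comm]; exact hcross v₀ w
    have h2 := norm_add_sq_real (ee w) d
    rw [h1] at h2
    nlinarith
  have keyOrtho : ∀ v w, (inner ℝ (u v) (ee w) : ℝ) = 0 := by
    intro v w
    have h1 := sqid _ _ (hcross v w)
    have h2 := sqid _ _ (hcross v w₀)
    have h3 := sqid _ _ (hcross v₀ w)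
    have h4 := sqid _ _ (hcross v₀ w₀)
    rw [hu, hee]
    show (inner ℝ (a v - a v₀) (b w - b w₀) : ℝ) = 0
    simp only [inner_sub_left, inner_sub_right]
    linarith
  set U₁ : Submodule ℝ (EuclideanSpace ℝ (Fin n)) := Submodule.span ℝ (Set.range u) with hU₁
  set U₂ : Submodule ℝ (EuclideanSpace ℝ (Fin n)) := Submodule.span ℝ (Set.range ee) with hU₂
  have hort : U₁ ⟂ U₂ := by
    rw [hU₁, hU₂, Submodule.isOrtho_span]
    rintro _ ⟨v, rfl⟩ _ ⟨w, rfl⟩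
    exact keyOrtho v w
  have humem : ∀ v, u v ∈ U₁ := fun v => Submodule.subset_span ⟨v, rfl⟩
  have heemem : ∀ w, ee w ∈ U₂ := fun w => Submodule.subset_span ⟨w, rfl⟩
  set P₁d : EuclideanSpace ℝ (Fin n) := (U₁.orthogonalProjectionOnto d : EuclideanSpace ℝ (Fin n))
    with hP₁
  set P₂d : EuclideanSpace ℝ (Fin n) := (U₂.orthogonalProjectionOnto d : EuclideanSpace ℝ (Fin n))
    with hP₂
  have hP₁mem : P₁d ∈ U₁ := SetLike.coe_mem _
  have hP₂mem : P₂d ∈ U₂ := SetLike.coe_mem _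
  have innerP₁ : ∀ x ∈ U₁, (inner ℝ x P₁d : ℝ) = inner ℝ x d := by
    intro x hx
    have h0 := (Submodule.mem_orthogonal U₁ _).mp
      (Submodule.sub_starProjection_mem_orthogonal (K := U₁) d) x hx
    rw [inner_sub_right] at h0
    change inner ℝ x d - inner ℝ x P₁d = 0 at h0
    linarith
  have innerP₂ : ∀ x ∈ U₂, (inner ℝ x P₂d : ℝ) = inner ℝ x d := by
    intro x hx
    have h0 := (Submodule.mem_orthogonal U₂ _).mp
      (Submodule.sub_starProjection_mem_orthogonal (K := U₂) d) x hx
    rw [inner_sub_right] at h0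
    change inner ℝ x d - inner ℝ x P₂d = 0 at h0
    linarith
  set r₁ : ℝ := ‖P₁d‖ with hr₁
  set r₂ : ℝ := ‖P₂d‖ with hr₂
  have hr₁nn : 0 ≤ r₁ := norm_nonneg _
  have hr₂nn : 0 ≤ r₂ := norm_nonneg _
  set c₁ : EuclideanSpace ℝ (Fin n) := a v₀ + P₁d with hc₁
  set c₂ : EuclideanSpace ℝ (Fin n) := b w₀ - P₂d with hc₂
  have hna : ∀ v, ‖a v - c₁‖ ^ 2 = r₁ ^ 2 := by
    intro v
    have h1 : a v - c₁ = u v - P₁d := by rw [hc₁, hu]; show _ = a v - a v₀ - P₁d; abel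
    rw [h1, norm_sub_sq_real, innerP₁ (u v) (humem v)]
    have := key1 v
    rw [hr₁]
    linarith
  have hnb : ∀ w, ‖b w - c₂‖ ^ 2 = r₂ ^ 2 := by
    intro w
    have h1 : b w - c₂ = ee w + P₂d := by rw [hc₂, hee]; show _ = b w - b w₀ + P₂d; abel
    rw [h1, norm_add_sq_real, innerP₂ (ee w) (heemem w)]
    have := key2 w
    rw [hr₂]
    linarith
  have hr₁pos : 0 < r₁ := by
    rcases hr₁nn.lt_or_eq with h | h
    · exact h
    · exfalso
      have hav : ∀ v, a v = c₁ := by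
        intro v
        have h2 := hna v
        rw [← h] at h2
        have h3 : ‖a v - c₁‖ = 0 := by nlinarith [norm_nonneg (a v - c₁)]
        rwa [norm_eq_zero, sub_eq_zero] at h3
      exact hv01 (Sum.inl_injective (Finj (show F (Sum.inl v₀) = F (Sum.inl v₁) from
        ((hav v₀).trans (hav v₁).symm))))
  have hr₂pos : 0 < r₂ := by
    rcases hr₂nn.lt_or_eq with h | h
    · exact h
    · exfalso
      have hbv : ∀ w, b w = c₂ := by
        intro w
        have h2 := hnb w
        rw [← h] at h2
        have h3 : ‖b w - c₂‖ = 0 := by nlinarith [norm_nonneg (b w - c₂)]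
        rwa [norm_eq_zero, sub_eq_zero] at h3
      exact hw01 (Sum.inr_injective (Finj (show F (Sum.inr w₀) = F (Sum.inr w₁) from
        ((hbv w₀).trans (hbv w₁).symm))))
  have hP12 : (inner ℝ P₁d P₂d : ℝ) = 0 := hort.inner_eq hP₁mem hP₂mem
  have hdP₁ : (inner ℝ d P₁d : ℝ) = r₁ ^ 2 := by
    rw [real_inner_comm P₁d d, ← innerP₁ P₁d hP₁mem, real_inner_self_eq_norm_sq, hr₁]
  have hdP₂ : (inner ℝ d P₂d : ℝ) = r₂ ^ 2 := by
    rw [real_inner_comm P₂d d, ← innerP₂ P₂d hP₂mem, real_inner_self_eq_norm_sq, hr₂]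
  set z : EuclideanSpace ℝ (Fin n) := d - (P₁d + P₂d) with hzdef
  have hz : ‖z‖ ^ 2 = 1 - r₁ ^ 2 - r₂ ^ 2 := by
    rw [hzdef, norm_sub_sq_real, inner_add_right, hdP₁, hdP₂, norm_add_sq_real, hP12,
      ← hr₁, ← hr₂]
    linarith [hd2]
  have hle : r₁ ^ 2 + r₂ ^ 2 ≤ 1 := by nlinarith [sq_nonneg ‖z‖, hz]
  have hr₁lt1 : r₁ < 1 := by nlinarith [pow_pos hr₂pos 2]
  have hfr : Module.finrank ℝ (EuclideanSpace ℝ (Fin n)) = n := finrank_euclideanSpace_fin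
  have hinf : U₁ ⊓ U₂ = ⊥ := disjoint_iff.mp hort.disjoint
  have hsup := Submodule.finrank_sup_add_finrank_inf_eq U₁ U₂
  rw [hinf] at hsup
  simp only [finrank_bot, add_zero] at hsup
  have hsuple : Module.finrank ℝ ↥(U₁ ⊔ U₂) ≤ n := by
    calc Module.finrank ℝ ↥(U₁ ⊔ U₂) ≤ Module.finrank ℝ (EuclideanSpace ℝ (Fin n)) :=
          Submodule.finrank_le _
      _ = n := hfr
  have hd₁d₂ : Module.finrank ℝ U₁ + Module.finrank ℝ U₂ ≤ n := by omega
  have hGemb : HasSphericalEmbeddingRadius G (Module.finrank ℝ U₁) r₁ := by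
    refine restrict_to_subspace G a ?_ ?_ ?_ U₁ c₁ ?_ ?_
    · intro v v' h
      exact Sum.inl_injective (Finj h)
    · intro x y h
      exact Fdist (graphJoin_adj_ll.mpr h)
    · intro x y h zz h1 h2 hs
      exact Fseg (graphJoin_adj_ll.mpr h) (Sum.inl zz)
        (fun hh => h1 (Sum.inl_injective hh)) (fun hh => h2 (Sum.inl_injective hh)) hs
    · intro v
      have h1 : a v - c₁ = u v - P₁d := by rw [hc₁, hu]; show _ = a v - a v₀ - P₁d; abel
      rw [h1]; exact Submodule.sub_mem _ (humem v) hP₁mem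
    · intro v
      exact eq_of_sq_eq_sq' (norm_nonneg _) hr₁nn (hna v)
  have hHemb : HasSphericalEmbeddingRadius H (Module.finrank ℝ U₂) r₂ := by
    refine restrict_to_subspace H b ?_ ?_ ?_ U₂ c₂ ?_ ?_
    · intro w w' h
      exact Sum.inr_injective (Finj h)
    · intro x y h
      exact Fdist (graphJoin_adj_rr.mpr h)
    · intro x y h zz h1 h2 hs
      exact Fseg (graphJoin_adj_rr.mpr h) (Sum.inr zz)
        (fun hh => h1 (Sum.inr_injective hh)) (fun hh => h2 (Sum.inr_injective hh)) hs
    · intro w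
      have h1 : b w - c₂ = ee w + P₂d := by rw [hc₂, hee]; show _ = b w - b w₀ + P₂d; abel
      rw [h1]; exact Submodule.add_mem _ (heemem w) hP₂mem
    · intro w
      exact eq_of_sq_eq_sq' (norm_nonneg _) hr₂nn (hnb w)
  set r₂' : ℝ := Real.sqrt (1 - r₁ ^ 2) with hr₂'def
  have h1r₁ : 0 ≤ 1 - r₁ ^ 2 := by linarith only [hle, sq_nonneg r₂]
  have hr₂'sq : r₂' ^ 2 = 1 - r₁ ^ 2 := Real.sq_sqrt h1r₁
  have hr₂'pos : 0 < r₂' := Real.sqrt_pos.mpr (by linarith only [hle, pow_pos hr₂pos 2])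
  have hr₂'lt1 : r₂' < 1 := by
    by_contra hcon
    push_neg at hcon
    have h6 : (1:ℝ) * 1 ≤ r₂' * r₂' :=
      mul_le_mul hcon hcon (by norm_num) (by linarith only [hcon])
    have h5 : r₂' ^ 2 < 1 := by linarith only [hr₂'sq, pow_pos hr₁pos 2]
    rw [pow_two] at h5
    linarith only [h5, h6]
  have hr₂le : r₂ ≤ r₂' := by
    have h5 : r₂ ^ 2 ≤ 1 - r₁ ^ 2 := by linarith only [hle]
    calc r₂ = Real.sqrt (r₂ ^ 2) := (Real.sqrt_sq hr₂nn).symm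
      _ ≤ r₂' := by rw [hr₂'def]; exact Real.sqrt_le_sqrt h5
  have hn₁le : Module.finrank ℝ U₁ ≤ n := by omega
  refine ⟨Module.finrank ℝ U₁, n - Module.finrank ℝ U₁, r₁, r₂', Nat.add_sub_cancel' hn₁le,
    hr₁pos, hr₁lt1, hr₂'pos, hr₂'lt1, by rw [hr₂'sq]; ring, hGemb, ?_⟩
  by_cases hz0 : z = 0
  · have hnz : ‖z‖ = 0 := by rw [hz0, norm_zero]
    have hnz2 : ‖z‖ ^ 2 = 0 := by rw [hnz]; norm_num
    have hsum1 : r₁ ^ 2 + r₂ ^ 2 = 1 := by linarith only [hz, hnz2]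
    have heq : r₂' = r₂ := by
      rw [hr₂'def, show (1:ℝ) - r₁ ^ 2 = r₂ ^ 2 by linarith only [hsum1], Real.sqrt_sq hr₂nn]
    rw [heq]
    exact sph_pad H (by omega) hHemb
  · have hzU₁ : ∀ x ∈ U₁, (inner ℝ x z : ℝ) = 0 := by
      intro x hx
      rw [hzdef, inner_sub_right, inner_add_right, innerP₁ x hx, hort.inner_eq hx hP₂mem]
      ring
    have hzU₂ : ∀ x ∈ U₂, (inner ℝ x z : ℝ) = 0 := by
      intro x hx
      rw [hzdef, inner_sub_right, inner_add_right, innerP₂ x hx,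
        (hort.symm).inner_eq hx hP₁mem]
      ring
    have hne : U₁ ⊔ U₂ ≠ ⊤ := by
      intro htop
      have hzz : z ∈ U₁ ⊔ U₂ := htop ▸ Submodule.mem_top
      obtain ⟨x₁, hx₁, x₂, hx₂, hxe⟩ := Submodule.mem_sup.mp hzz
      have hzero : (inner ℝ z z : ℝ) = 0 := by
        nth_rewrite 1 [← hxe]
        rw [inner_add_left, hzU₁ x₁ hx₁, hzU₂ x₂ hx₂]
        norm_num
      exact hz0 (inner_self_eq_zero.mp hzero)
    have hlt : Module.finrank ℝ ↥(U₁ ⊔ U₂) < n := by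
      calc Module.finrank ℝ ↥(U₁ ⊔ U₂) < Module.finrank ℝ (EuclideanSpace ℝ (Fin n)) :=
            Submodule.finrank_lt hne
        _ = n := hfr
    have hfit : Module.finrank ℝ U₂ + 1 ≤ n - Module.finrank ℝ U₁ := by omega
    exact sph_pad H hfit (sph_lift H hr₂nn hr₂le hHemb)



/-- (i) If `G` and `H` (each with more than one vertex) embed on spheres of
radii `r₁, r₂ ∈ (0,1)` in `ℝ^{n₁}` and `ℝ^{n₂}` with `r₁² + r₂² = 1`, then `G + H` has a
unit-distance embedding in `ℝ^{n₁+n₂}`.  (ii) Conversely, if `G + H` embeds in `ℝⁿ` then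
such `n₁, n₂` with `n₁ + n₂ = n` and radii `r₁, r₂` exist. -/
theorem stmt6 {V W : Type} [Fintype V] [Fintype W] (G : SimpleGraph V) (H : SimpleGraph W)
    (hV : 1 < Fintype.card V) (hW : 1 < Fintype.card W) :
    (∀ (n₁ n₂ : ℕ) (r₁ r₂ : ℝ), 0 < r₁ → r₁ < 1 → 0 < r₂ → r₂ < 1 → r₁ ^ 2 + r₂ ^ 2 = 1 →
      HasSphericalEmbeddingRadius G n₁ r₁ → HasSphericalEmbeddingRadius H n₂ r₂ →
      HasUDEmbedding (graphJoin G H) (n₁ + n₂)) ∧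
    (∀ n : ℕ, HasUDEmbedding (graphJoin G H) n →
      ∃ (n₁ n₂ : ℕ) (r₁ r₂ : ℝ), n₁ + n₂ = n ∧ 0 < r₁ ∧ r₁ < 1 ∧ 0 < r₂ ∧ r₂ < 1 ∧
        r₁ ^ 2 + r₂ ^ 2 = 1 ∧
        HasSphericalEmbeddingRadius G n₁ r₁ ∧ HasSphericalEmbeddingRadius H n₂ r₂) := by
  constructor
  · intro n₁ n₂ r₁ r₂ h1 h2 h3 h4 h5 hG hH
    exact join_embed G H h1 h3 h5 hG hH
  · intro n h
    exact join_unembed G H hV hW n h
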